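/- Let X be a locally compact topological space and (Y,d) a metric space, and equip C(X,Y) with the topology of uniform convergence τ_uc (induced by the supremum uniformity). A subfamily F ⊆ C(X,Y) is relatively τ_uc-compact if and only if (i) for every x ∈ X the set {f(x) : f ∈ F} has compact closure in Y, (ii) F is equicontinuous, and (iii) F satisfies the BC(X,Y)-extension property: for every ε > 0 there exist a compact set D ⊆ X and δ > 0 such that for all f,g ∈ F, if d(f(x),g(x)) < δ for all x ∈ D, then d(f(x),g(x)) < ε for all x ∈ X. -/

import Mathlib

open Set Filter Topology
open scoped UniformConvergence Uniformity

/-- **Arzelà–Ascoli for the topology of uniform convergence, metric version.**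
Let `X` be a locally compact topological space (every point has a compact
neighborhood) and `Y` a metric space; `X →ᵤ Y` carries the supremum uniformity and the
topology of uniform convergence.  A family `F` of continuous maps is relatively
compact iff it is pointwise relatively compact, equicontinuous, and satisfies the
`BC(X,Y)`-extension property. -/
theorem arzelaAscoli_uniformConvergence_metric
    {X Y : Type*} [TopologicalSpace X] [WeaklyLocallyCompactSpace X]
    [MetricSpace Y]
    (F : Set (X →ᵤ Y)) (hF : ∀ f ∈ F, Continuous (UniformFun.toFun f)) :
    IsCompact (closure F) ↔
      (∀ x : X,
        IsCompact (closure ((fun f : X →ᵤ Y => UniformFun.toFun f x) '' F))) ∧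
      (∀ x : X, ∀ ε > (0 : ℝ), ∃ U ∈ nhds x, ∀ f ∈ F, ∀ x' ∈ U,
        dist (UniformFun.toFun f x) (UniformFun.toFun f x') < ε) ∧
      (∀ ε > (0 : ℝ), ∃ D : Set X, IsCompact D ∧ ∃ δ > (0 : ℝ),
        ∀ f ∈ F, ∀ g ∈ F,
          (∀ x ∈ D, dist (UniformFun.toFun f x) (UniformFun.toFun g x) < δ) →
          ∀ x : X, dist (UniformFun.toFun f x) (UniformFun.toFun g x) < ε) := by
  classical
  have ucb : (𝓤 (X →ᵤ Y)).HasBasis (fun ε : ℝ => 0 < ε)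
      (fun ε => {fg : (X →ᵤ Y) × (X →ᵤ Y) |
        ∀ x, dist (UniformFun.toFun fg.1 x) (UniformFun.toFun fg.2 x) < ε}) := by
    exact
      UniformFun.hasBasis_uniformity_of_basis X Y Metric.uniformity_basis_dist
  constructor
  · intro h
    have tb : TotallyBounded F := h.totallyBounded.subset subset_closure
    have net : ∀ ε > (0 : ℝ), ∃ t : Set (X →ᵤ Y), t ⊆ F ∧ t.Finite ∧
        ∀ f ∈ F, ∃ g ∈ t, ∀ x, dist (UniformFun.toFun f x) (UniformFun.toFun g x) < ε := by
      intro ε hε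
      obtain ⟨t, htF, htfin, hcov⟩ := totallyBounded_iff_subset.mp tb _ (ucb.mem_of_mem hε)
      refine ⟨t, htF, htfin, fun f hf => ?_⟩
      have := hcov hf
      simpa using this
    refine ⟨?_, ?_, ?_⟩
    · intro x
      have hev : Continuous (fun f : X →ᵤ Y => UniformFun.toFun f x) :=
        (UniformFun.uniformContinuous_eval Y x).continuous
      have himg : IsCompact ((fun f : X →ᵤ Y => UniformFun.toFun f x) '' closure F) :=
        h.image hev
      exact himg.of_isClosed_subset isClosed_closure
        (closure_minimal (image_mono subset_closure) himg.isClosed)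
    · intro x ε hε
      obtain ⟨t, htF, htfin, hcov⟩ := net (ε / 4) (by linarith)
      have hU : (⋂ g ∈ t,
          {x' | dist (UniformFun.toFun g x') (UniformFun.toFun g x) < ε / 4}) ∈ 𝓝 x := by
        refine (Filter.biInter_mem htfin).2 fun g hg => ?_
        have hc : ContinuousAt (UniformFun.toFun g) x := (hF g (htF hg)).continuousAt
        have := hc (Metric.ball_mem_nhds (UniformFun.toFun g x) (by linarith : (0:ℝ) < ε / 4))
        simpa [Metric.ball] using this
      refine ⟨_, hU, ?_⟩
      intro f hf x' hx'
      obtain ⟨g, hg, hfg⟩ := hcov f hf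
      have h1 := hfg x
      have h2 := hfg x'
      have h3 : dist (UniformFun.toFun g x') (UniformFun.toFun g x) < ε / 4 :=
        mem_iInter₂.mp hx' g hg
      have h4 := dist_triangle4 (UniformFun.toFun f x) (UniformFun.toFun g x)
        (UniformFun.toFun g x') (UniformFun.toFun f x')
      have h5 : dist (UniformFun.toFun g x) (UniformFun.toFun g x') < ε / 4 := by
        rwa [dist_comm]
      have h6 : dist (UniformFun.toFun g x') (UniformFun.toFun f x') < ε / 4 := by
        rwa [dist_comm]
      linarith
    · intro ε hε
      obtain ⟨t, htF, htfin, hcov⟩ := net (ε / 5) (by linarith)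
      set W : (X →ᵤ Y) → (X →ᵤ Y) → Set X := fun a b =>
        if h : ∃ x, 3 * (ε / 5) ≤ dist (UniformFun.toFun a x) (UniformFun.toFun b x)
        then {h.choose} else ∅ with hW
      have hWfin : ∀ a b, (W a b).Finite := by
        intro a b
        rw [hW]
        dsimp only
        split_ifs
        exacts [finite_singleton _, finite_empty]
      have hDfin : (⋃ a ∈ t, ⋃ b ∈ t, W a b).Finite :=
        htfin.biUnion fun a _ => htfin.biUnion fun b _ => hWfin a b
      refine ⟨_, hDfin.isCompact, ε / 5, by linarith, ?_⟩
      intro f hf g hg hclose x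
      obtain ⟨a, ha, hfa⟩ := hcov f hf
      obtain ⟨b, hb, hgb⟩ := hcov g hg
      by_contra hxε
      push_neg at hxε
      have hab : 3 * (ε / 5) ≤ dist (UniformFun.toFun a x) (UniformFun.toFun b x) := by
        have h4 := dist_triangle4 (UniformFun.toFun f x) (UniformFun.toFun a x)
          (UniformFun.toFun b x) (UniformFun.toFun g x)
        have h5 := hfa x
        have h6 : dist (UniformFun.toFun b x) (UniformFun.toFun g x) < ε / 5 := by
          rw [dist_comm]; exact hgb x
        linarith
      have hex : ∃ z, 3 * (ε / 5) ≤ dist (UniformFun.toFun a z) (UniformFun.toFun b z) :=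
        ⟨x, hab⟩
      have hcspec := hex.choose_spec
      set c := hex.choose with hc
      have hcW : c ∈ W a b := by
        rw [hW]
        simp only [dif_pos hex]
        exact rfl
      have hcD : c ∈ ⋃ a ∈ t, ⋃ b ∈ t, W a b :=
        mem_biUnion ha (mem_biUnion hb hcW)
      have hdc := hclose c hcD
      have h4 := dist_triangle4 (UniformFun.toFun a c) (UniformFun.toFun f c)
        (UniformFun.toFun g c) (UniformFun.toFun b c)
      have h5 : dist (UniformFun.toFun a c) (UniformFun.toFun f c) < ε / 5 := by
        rw [dist_comm]; exact hfa c
      have h6 := hgb c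
      linarith
  · rintro ⟨h1, h2, h3⟩
    rw [isCompact_iff_totallyBounded_isComplete]
    constructor
    · refine TotallyBounded.closure ?_
      rw [ucb.totallyBounded_iff]
      intro ε hε
      rcases F.eq_empty_or_nonempty with rfl | ⟨f₀, hf₀⟩
      · exact ⟨∅, finite_empty, by simp⟩
      obtain ⟨D, hD, δ, hδ, hP⟩ := h3 ε hε
      choose U hUmem hUprop using fun x => h2 x (δ / 4) (by linarith)
      obtain ⟨s, hsD, hscov⟩ := hD.elim_nhds_subcover U fun x _ => hUmem x
      set Φ : (X →ᵤ Y) → ({x // x ∈ s} → Y) := fun f i => UniformFun.toFun f i.1 with hΦdef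
      have hT : IsCompact (univ.pi fun i : {x // x ∈ s} =>
          closure ((fun f : X →ᵤ Y => UniformFun.toFun f i.1) '' F)) :=
        isCompact_univ_pi fun i => h1 i.1
      have hΦF : Φ '' F ⊆ univ.pi fun i : {x // x ∈ s} =>
          closure ((fun f : X →ᵤ Y => UniformFun.toFun f i.1) '' F) := by
        rintro _ ⟨f, hf, rfl⟩ i _
        exact subset_closure ⟨f, hf, rfl⟩
      have htbΦ : TotallyBounded (Φ '' F) := hT.totallyBounded.subset hΦF
      have hE : {p : ({x // x ∈ s} → Y) × ({x // x ∈ s} → Y) |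
          ∀ i, dist (p.1 i) (p.2 i) < δ / 4} ∈ 𝓤 ({x // x ∈ s} → Y) := by
        have heq : {p : ({x // x ∈ s} → Y) × ({x // x ∈ s} → Y) |
            ∀ i, dist (p.1 i) (p.2 i) < δ / 4} =
            ⋂ i : {x // x ∈ s}, (fun p : ({x // x ∈ s} → Y) × ({x // x ∈ s} → Y) =>
              (p.1 i, p.2 i)) ⁻¹' {q : Y × Y | dist q.1 q.2 < δ / 4} := by
          ext p; simp
        rw [heq, Filter.iInter_mem]
        intro i
        rw [Pi.uniformity]
        exact mem_iInf_of_mem i (preimage_mem_comap (Metric.dist_mem_uniformity (by linarith)))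
      obtain ⟨G, hGsub, hGfin, hGcov⟩ := totallyBounded_iff_subset.mp htbΦ _ hE
      have hrep : ∀ v, ∃ g, g ∈ F ∧ (v ∈ G → Φ g = v) := by
        intro v
        by_cases hv : v ∈ G
        · obtain ⟨g, hg, rfl⟩ := hGsub hv
          exact ⟨g, hg, fun _ => rfl⟩
        · exact ⟨f₀, hf₀, fun hc => absurd hc hv⟩
      choose rep hrepF hrepΦ using hrep
      refine ⟨rep '' G, hGfin.image _, ?_⟩
      intro f hf
      have : Φ f ∈ ⋃ v ∈ G, {u | (u, v) ∈ {p : ({x // x ∈ s} → Y) × ({x // x ∈ s} → Y) |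
          ∀ i, dist (p.1 i) (p.2 i) < δ / 4}} := hGcov ⟨f, hf, rfl⟩
      obtain ⟨v, hv, huv⟩ := mem_iUnion₂.mp this
      have hnear : ∀ i : {x // x ∈ s},
          dist (UniformFun.toFun f i.1) (UniformFun.toFun (rep v) i.1) < δ / 4 := by
        intro i
        have hvi := huv i
        rw [← hrepΦ v hv] at hvi
        exact hvi
      have hclose : ∀ x ∈ D,
          dist (UniformFun.toFun f x) (UniformFun.toFun (rep v) x) < δ := by
        intro x hx
        obtain ⟨x₀, hx₀, hxU⟩ := mem_iUnion₂.mp (hscov hx)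
        have hfx : dist (UniformFun.toFun f x₀) (UniformFun.toFun f x) < δ / 4 :=
          hUprop x₀ f hf x hxU
        have hgx : dist (UniformFun.toFun (rep v) x₀) (UniformFun.toFun (rep v) x) < δ / 4 :=
          hUprop x₀ (rep v) (hrepF v) x hxU
        have h4 := dist_triangle4 (UniformFun.toFun f x) (UniformFun.toFun f x₀)
          (UniformFun.toFun (rep v) x₀) (UniformFun.toFun (rep v) x)
        have h5 : dist (UniformFun.toFun f x) (UniformFun.toFun f x₀) < δ / 4 := by
          rw [dist_comm]; exact hfx
        have h6 := hnear ⟨x₀, hx₀⟩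
        linarith
      have hfin := hP f hf (rep v) (hrepF v) hclose
      refine mem_biUnion (mem_image_of_mem rep hv) ?_
      exact hfin
    · intro l hl hlF
      haveI : l.NeBot := hl.1
      have hev : ∀ x : X, UniformContinuous (fun f : X →ᵤ Y => UniformFun.toFun f x) :=
        fun x => UniformFun.uniformContinuous_eval Y x
      have key : ∀ x : X, ∃ y,
          y ∈ closure ((fun f : X →ᵤ Y => UniformFun.toFun f x) '' F) ∧
          Tendsto (fun f : X →ᵤ Y => UniformFun.toFun f x) l (𝓝 y) := by
        intro x
        have hc : Cauchy (map (fun f : X →ᵤ Y => UniformFun.toFun f x) l) := hl.map (hev x)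
        have hsub : map (fun f : X →ᵤ Y => UniformFun.toFun f x) l ≤
            𝓟 (closure ((fun f : X →ᵤ Y => UniformFun.toFun f x) '' F)) := by
          calc map (fun f : X →ᵤ Y => UniformFun.toFun f x) l
              ≤ map (fun f : X →ᵤ Y => UniformFun.toFun f x) (𝓟 (closure F)) := map_mono hlF
            _ = 𝓟 ((fun f : X →ᵤ Y => UniformFun.toFun f x) '' closure F) := map_principal
            _ ≤ 𝓟 (closure ((fun f : X →ᵤ Y => UniformFun.toFun f x) '' F)) :=
                principal_mono.2 (image_closure_subset_closure_image (hev x).continuous)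
        exact (h1 x).isComplete _ hc hsub
      choose y hy hylim using key
      have hconv : l ≤ 𝓝 (UniformFun.ofFun y) := by
        rw [(UniformFun.hasBasis_nhds_of_basis X Y (UniformFun.ofFun y)
          Metric.uniformity_basis_dist).ge_iff]
        intro ε hε
        obtain ⟨A, hA, hAA⟩ := (cauchy_iff.mp hl).2 _ (ucb.mem_of_mem (half_pos hε))
        refine mem_of_superset hA ?_
        intro g hg
        have hgx : ∀ x : X, dist (y x) (UniformFun.toFun g x) ≤ ε / 2 := by
          intro x
          have hball : ∀ᶠ h in l, UniformFun.toFun h x ∈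
              Metric.closedBall (UniformFun.toFun g x) (ε / 2) := by
            filter_upwards [hA] with k hk
            have hkg : ∀ z, dist (UniformFun.toFun k z) (UniformFun.toFun g z) < ε / 2 :=
              hAA (mk_mem_prod hk hg)
            exact Metric.mem_closedBall.2 (le_of_lt (hkg x))
          exact Metric.mem_closedBall.1
            (Metric.isClosed_closedBall.mem_of_tendsto (hylim x) hball)
        intro x
        exact lt_of_le_of_lt (hgx x) (by linarith)
      refine ⟨UniformFun.ofFun y, ?_, hconv⟩
      have hmem : closure F ∈ l := hlF (mem_principal_self _)
      have := mem_closure_of_tendsto (show Tendsto id l (𝓝 (UniformFun.ofFun y)) from hconv)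
        (Filter.eventually_of_mem hmem fun x hx => hx)
      rwa [closure_closure] at this
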